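/- arXiv:1211.4621 — 2 statements merged into one kernel-verified Lean document; each statement's English description precedes it below -/
import Mathlib

section
/- Suppose h* ∈ Λ satisfies the dynamic user equilibrium condition: for each OD pair (i,j) and each p ∈ P_{ij}, h*_p(t) > 0 implies Ψ_p(t, h*) = v_{ij}, where v_{ij} = essinf{ Ψ_p(t, h*) : p ∈ P_{ij}, t ∈ [t_0, t_f] }. Then h* solves the variational inequality: Σ_{p ∈ P} ∫_{t_0}^{t_f} Ψ_p(t, h*)(h_p(t) − h*_p(t)) dt ≥ 0 for all h ∈ Λ. -/
open Set MeasureTheory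

theorem due_implies_variational_inequality (t0 tf : ℝ) (ht : t0 < tf)
    (P W : Type) [Fintype P] [Fintype W]
    (Pset : W → Finset P) (hcover : ∀ p : P, ∃! w, p ∈ Pset w)
    (Q : W → ℝ)
    (μ : Measure ℝ) (hμ : μ = volume.restrict (Icc t0 tf))
    (Ψ : P → ℝ → ℝ) (hΨ : ∀ p, MemLp (Ψ p) 2 μ)
    (v : W → ℝ)
    (hstar : P → ℝ → ℝ) (hstarL2 : ∀ p, MemLp (hstar p) 2 μ)
    (hstarpos : ∀ p, ∀ᵐ t ∂μ, 0 ≤ hstar p t)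
    (hdemand : ∀ w, ∑ p ∈ Pset w, ∫ t, hstar p t ∂μ = Q w)
    (hlb : ∀ w, ∀ p ∈ Pset w, ∀ᵐ t ∂μ, v w ≤ Ψ p t)
    (heq : ∀ w, ∀ p ∈ Pset w, ∀ᵐ t ∂μ, 0 < hstar p t → Ψ p t = v w) :
    ∀ h : P → ℝ → ℝ, (∀ p, MemLp (h p) 2 μ) → (∀ p, ∀ᵐ t ∂μ, 0 ≤ h p t) →
      (∀ w, ∑ p ∈ Pset w, ∫ t, h p t ∂μ = Q w) →
      0 ≤ ∑ p : P, ∫ t, Ψ p t * (h p t - hstar p t) ∂μ := by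
  intro h hL2 hpos hQ
  have hfin : IsFiniteMeasure μ := by
    subst hμ
    constructor
    rw [Measure.restrict_apply_univ]
    exact (measure_Icc_lt_top)
  -- integrability facts
  have hintΨ : ∀ p, Integrable (fun t => Ψ p t * (h p t - hstar p t)) μ := by
    intro p
    have h1 : MemLp (Ψ p • fun t => h p t - hstar p t) 1 μ :=
      ((hL2 p).sub (hstarL2 p)).smul (hΨ p) (hpqr := ⟨by rw [inv_one, ENNReal.inv_two_add_inv_two]⟩)
    have := memLp_one_iff_integrable.mp h1
    exact this
  have hinth : ∀ p, Integrable (h p) μ := fun p => (hL2 p).integrable one_le_two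
  have hinths : ∀ p, Integrable (hstar p) μ := fun p => (hstarL2 p).integrable one_le_two
  -- classify each p by its unique w
  classical
  let g : P → W := fun p => (hcover p).choose
  have hg : ∀ p, p ∈ Pset (g p) := fun p => (hcover p).choose_spec.1
  have hmem : ∀ p w, p ∈ Pset w ↔ g p = w := by
    intro p w
    constructor
    · intro hp; exact ((hcover p).choose_spec.2 w hp).symm
    · intro hp; exact hp ▸ hg p
  have hsplit : ∑ p : P, ∫ t, Ψ p t * (h p t - hstar p t) ∂μ
      = ∑ w : W, ∑ p ∈ Pset w, ∫ t, Ψ p t * (h p t - hstar p t) ∂μ := by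
    rw [← Finset.sum_fiberwise (Finset.univ) g
      (fun p => ∫ t, Ψ p t * (h p t - hstar p t) ∂μ)]
    apply Finset.sum_congr rfl
    intro w _
    apply Finset.sum_congr _ (fun _ _ => rfl)
    ext p
    simp [hmem p w]
  rw [hsplit]
  apply Finset.sum_nonneg
  intro w _
  have key : ∀ p ∈ Pset w,
      v w * (∫ t, h p t ∂μ - ∫ t, hstar p t ∂μ)
        ≤ ∫ t, Ψ p t * (h p t - hstar p t) ∂μ := by
    intro p hp
    have hint2 : Integrable (fun t => v w * (h p t - hstar p t)) μ :=
      ((hinth p).sub (hinths p)).const_mul _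
    have hae : ∀ᵐ t ∂μ, v w * (h p t - hstar p t) ≤ Ψ p t * (h p t - hstar p t) := by
      filter_upwards [hlb w p hp, heq w p hp, hstarpos p, hpos p] with t h1 h2 h3 h4
      rcases eq_or_lt_of_le h3 with h5 | h5
      · have : Ψ p t * (h p t - hstar p t) = Ψ p t * h p t := by rw [← h5]; ring
        rw [this, ← h5]
        have := mul_le_mul_of_nonneg_right h1 h4
        nlinarith
      · rw [h2 h5]
    calc v w * (∫ t, h p t ∂μ - ∫ t, hstar p t ∂μ)
        = ∫ t, v w * (h p t - hstar p t) ∂μ := by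
          rw [integral_const_mul, integral_sub (hinth p) (hinths p)]
      _ ≤ ∫ t, Ψ p t * (h p t - hstar p t) ∂μ :=
          integral_mono_ae hint2 (hintΨ p) hae
  calc (0:ℝ) = ∑ p ∈ Pset w, v w * (∫ t, h p t ∂μ - ∫ t, hstar p t ∂μ) := by
        rw [← Finset.mul_sum, Finset.sum_sub_distrib, hQ w, hdemand w]; ring
    _ ≤ _ := Finset.sum_le_sum key
end

section
/- Consider a single arc with affine delay D(x) = αx + β, α ≥ 0, β > 0. If the sequence of entering flows u^(n) converges to u in L²₊([t_0, t_f]), then the corresponding exit time functions τ^(n) converge uniformly to τ on [t_0, t_f], and the cumulative exit counts V^(n)(t) = U^(n)((τ^(n))^{-1}(t)) converge uniformly to V(t) = U(τ^{-1}(t)). -/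
open Set Filter MeasureTheory

namespace SingleArcAux

/-- cumulative inflow -/
noncomputable def primU (t0 : ℝ) (u : ℝ → ℝ) (t : ℝ) : ℝ := ∫ s in t0..t, u s

/-- A "system": inflow `u`, cumulative exit count `V`, exit time `τ`. -/
structure Sys (t0 tf α β : ℝ) (u V τ : ℝ → ℝ) : Prop where
  hu_int : IntegrableOn u (Icc t0 tf) volume
  hupos : ∀ t, 0 ≤ u t
  hVmono : Monotone V
  hV0 : ∀ t, t ≤ t0 → V t = 0
  hτdef : ∀ t, τ t = t + α * (primU t0 u t - V t) + β
  hFIFO : ∀ t ∈ Icc t0 tf, V (τ t) = primU t0 u t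

variable {t0 tf α β : ℝ} {u V τ : ℝ → ℝ}

lemma U_zero : primU t0 u t0 = 0 := intervalIntegral.integral_same

lemma U_intInt (S : Sys t0 tf α β u V τ) {a b : ℝ} (ha : a ∈ Icc t0 tf)
    (hb : b ∈ Icc t0 tf) : IntervalIntegrable u volume a b := by
  refine (S.hu_int.mono_set ?_).intervalIntegrable
  intro x hx
  rcases le_total a b with h | h
  · rw [uIcc_of_le h] at hx; exact ⟨ha.1.trans hx.1, hx.2.trans hb.2⟩
  · rw [uIcc_of_ge h] at hx; exact ⟨hb.1.trans hx.1, hx.2.trans ha.2⟩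

lemma U_mono (S : Sys t0 tf α β u V τ) {a b : ℝ} (ha : a ∈ Icc t0 tf)
    (hb : b ∈ Icc t0 tf) (hab : a ≤ b) : primU t0 u a ≤ primU t0 u b := by
  have h1 : IntervalIntegrable u volume t0 a := U_intInt S (left_mem_Icc.2 (ha.1.trans ha.2)) ha
  have h2 : IntervalIntegrable u volume a b := U_intInt S ha hb
  have hadd := intervalIntegral.integral_add_adjacent_intervals h1 h2
  have hnn : 0 ≤ ∫ s in a..b, u s :=
    intervalIntegral.integral_nonneg hab (fun x _ => S.hupos x)
  have : primU t0 u b = primU t0 u a + ∫ s in a..b, u s := by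
    rw [primU, primU, ← hadd]
  linarith

lemma U_cont (S : Sys t0 tf α β u V τ) (htt : t0 ≤ tf) :
    ContinuousOn (primU t0 u) (Icc t0 tf) := by
  have := intervalIntegral.continuousOn_primitive_interval
    (μ := volume) (a := t0) (b := tf) (f := u) (by rw [uIcc_of_le htt]; exact S.hu_int)
  rwa [uIcc_of_le htt] at this

lemma U_nonneg (S : Sys t0 tf α β u V τ) {a : ℝ} (ha : a ∈ Icc t0 tf) :
    0 ≤ primU t0 u a := by
  have := U_mono S (left_mem_Icc.2 (ha.1.trans ha.2)) ha ha.1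
  rwa [U_zero] at this

lemma V_nonneg (S : Sys t0 tf α β u V τ) (t : ℝ) : 0 ≤ V t := by
  rcases le_total t t0 with h | h
  · rw [S.hV0 t h]
  · have := S.hVmono h
    rwa [S.hV0 t0 le_rfl] at this

lemma tau_t0 (S : Sys t0 tf α β u V τ) : τ t0 = t0 + β := by
  rw [S.hτdef t0, U_zero, S.hV0 t0 le_rfl]; ring

/-- V vanishes up to `t0 + β`. -/
lemma V_zero' (S : Sys t0 tf α β u V τ) (htt : t0 ≤ tf) {t : ℝ} (h : t ≤ t0 + β) :
    V t = 0 := by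
  have hb : V (t0 + β) = 0 := by
    have := S.hFIFO t0 (left_mem_Icc.2 htt)
    rw [tau_t0 S, U_zero] at this; exact this
  have h1 : V t ≤ 0 := hb ▸ S.hVmono h
  exact le_antisymm h1 (V_nonneg S t)

/-- `V ≤ U` on `[t0, tf]`. -/
lemma V_le_U (S : Sys t0 tf α β u V τ) (htt : t0 ≤ tf) (hα : 0 ≤ α) (hβ : 0 < β) :
    ∀ t ∈ Icc t0 tf, V t ≤ primU t0 u t := by
  by_contra hcon
  push_neg at hcon
  obtain ⟨t1, ht1, hlt1⟩ := hcon
  set B : Set ℝ := {t | t ∈ Icc t0 tf ∧ primU t0 u t < V t} with hB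
  have hne : B.Nonempty := ⟨t1, ht1, hlt1⟩
  have hbdd : BddBelow B := ⟨t0, fun x hx => hx.1.1⟩
  set c := sInf B with hc
  have hβ2 : 0 < β / 2 := by linarith
  obtain ⟨t, htB, htlt⟩ := (csInf_lt_iff hbdd hne).1 (by linarith : c < c + β / 2)
  set s := max t0 (t - β / 2) with hs
  have hst : s ≤ t := max_le htB.1.1 (by linarith)
  have hsIcc : s ∈ Icc t0 tf := ⟨le_max_left _ _, hst.trans htB.1.2⟩
  have hsnB : s ∉ B := by
    intro hmem
    rcases max_cases t0 (t - β / 2) with ⟨heq, _⟩ | ⟨heq, _⟩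
    · rw [hs.trans heq] at hmem
      have h0 : primU t0 u t0 < V t0 := hmem.2
      rw [U_zero, S.hV0 t0 le_rfl] at h0; exact lt_irrefl 0 h0
    · have h1 : c ≤ s := csInf_le hbdd hmem
      have h2 : s < c := by rw [hs.trans heq]; linarith
      linarith
  have hVU : V s ≤ primU t0 u s := by
    by_contra h; push_neg at h; exact hsnB ⟨hsIcc, h⟩
  have hτs : t < τ s := by
    rw [S.hτdef s]
    have h3 : 0 ≤ α * (primU t0 u s - V s) := mul_nonneg hα (by linarith)
    have hs2 : t - β / 2 ≤ s := le_max_right _ _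
    linarith
  have hfin : V t ≤ primU t0 u t := by
    have h1 : V t ≤ V (τ s) := S.hVmono hτs.le
    rw [S.hFIFO s hsIcc] at h1
    exact h1.trans (U_mono S hsIcc htB.1 hst)
  exact absurd hfin (not_le.2 htB.2)

lemma tau_ge (S : Sys t0 tf α β u V τ) (htt : t0 ≤ tf) (hα : 0 ≤ α) (hβ : 0 < β) :
    ∀ t ∈ Icc t0 tf, t + β ≤ τ t := by
  intro t htm
  rw [S.hτdef t]
  have h1 : 0 ≤ α * (primU t0 u t - V t) :=
    mul_nonneg hα (by linarith [V_le_U S htt hα hβ t htm])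
  linarith

/-- Characterization of `V` at a time `tt ∈ [t0+β, tf+β]`. -/
lemma char (S : Sys t0 tf α β u V τ) (htt : t0 ≤ tf) (hα : 0 ≤ α) (hβ : 0 < β)
    {tt : ℝ}
    (hmono : ∀ s1 s2, s1 ∈ Icc t0 tf → s2 ∈ Icc t0 tf → s1 ≤ s2 → τ s2 ≤ tt →
      τ s1 ≤ τ s2)
    (h1 : t0 + β ≤ tt) (h2 : tt ≤ tf + β) :
    ∃ sb, sb ∈ Icc t0 tf ∧ V tt = primU t0 u sb ∧
      (∀ s ∈ Icc t0 tf, s < sb → τ s ≤ tt) ∧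
      (∀ s ∈ Icc t0 tf, sb < s → tt < τ s) := by
  classical
  set A : Set ℝ := {s | s ∈ Icc t0 tf ∧ τ s ≤ tt} with hA
  have hne : A.Nonempty := ⟨t0, ⟨left_mem_Icc.2 htt, by rw [tau_t0 S]; exact h1⟩⟩
  have hbdd : BddAbove A := ⟨tf, fun x hx => hx.1.2⟩
  set sb := sSup A with hsb
  have hsb1 : t0 ≤ sb := le_csSup hbdd ⟨left_mem_Icc.2 htt, by rw [tau_t0 S]; exact h1⟩
  have hsb2 : sb ≤ tf := csSup_le hne (fun x hx => hx.1.2)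
  have hsbIcc : sb ∈ Icc t0 tf := ⟨hsb1, hsb2⟩
  have hiv : ∀ s ∈ Icc t0 tf, sb < s → tt < τ s := by
    intro s hsm hlt
    by_contra hcon
    push_neg at hcon
    exact absurd (le_csSup hbdd ⟨hsm, hcon⟩) (not_le.2 hlt)
  have hiii : ∀ s ∈ Icc t0 tf, s < sb → τ s ≤ tt := by
    intro s hsm hlt
    obtain ⟨s2, hs2A, hlt2⟩ := exists_lt_of_lt_csSup hne hlt
    exact (hmono s s2 hsm hs2A.1 hlt2.le hs2A.2).trans hs2A.2
  have hge : primU t0 u sb ≤ V tt := by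
    have hcl : sb ∈ closure A := csSup_mem_closure hne hbdd
    haveI : (nhdsWithin sb A).NeBot := mem_closure_iff_nhdsWithin_neBot.mp hcl
    have hcw : ContinuousWithinAt (primU t0 u) A sb :=
      ((U_cont S htt) sb hsbIcc).mono (fun x hx => hx.1)
    refine le_of_tendsto hcw (eventually_nhdsWithin_of_forall ?_)
    intro s hsA
    have := S.hVmono hsA.2
    rwa [S.hFIFO s hsA.1] at this
  have hle : V tt ≤ primU t0 u sb := by
    rcases eq_or_lt_of_le hsb2 with heq | hlt
    · have h3 : tt ≤ τ tf := h2.trans (by linarith [tau_ge S htt hα hβ tf (right_mem_Icc.2 htt)])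
      have h4 : V tt ≤ V (τ tf) := S.hVmono h3
      rw [S.hFIFO tf (right_mem_Icc.2 htt)] at h4
      rw [heq]; exact h4
    · have hcl : sb ∈ closure (Ioc sb tf) := by
        rw [closure_Ioc hlt.ne]; exact ⟨le_rfl, hlt.le⟩
      haveI : (nhdsWithin sb (Ioc sb tf)).NeBot := mem_closure_iff_nhdsWithin_neBot.mp hcl
      have hcw : ContinuousWithinAt (primU t0 u) (Ioc sb tf) sb :=
        ((U_cont S htt) sb hsbIcc).mono (fun x hx => ⟨hsb1.trans hx.1.le, hx.2⟩)
      refine ge_of_tendsto hcw (eventually_nhdsWithin_of_forall ?_)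
      intro s hsA
      have hsm : s ∈ Icc t0 tf := ⟨hsb1.trans hsA.1.le, hsA.2⟩
      have h5 : tt < τ s := hiv s hsm hsA.1
      have h6 := S.hVmono h5.le
      rwa [S.hFIFO s hsm] at h6
  exact ⟨sb, hsbIcc, le_antisymm hle hge, hiii, hiv⟩

/-- `V` is `1/α`-Lipschitz on `[t0, tf+β]` (stated multiplied by `α`). -/
lemma lip (S : Sys t0 tf α β u V τ) (htt : t0 ≤ tf) (hα : 0 ≤ α) (hβ : 0 < β) :
    ∀ k : ℕ, ∀ t1 t2, t0 ≤ t1 → t1 ≤ t2 → t2 ≤ min (t0 + (k + 1) * β) (tf + β) →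
      α * (V t2 - V t1) ≤ t2 - t1 := by
  intro k
  induction k with
  | zero =>
    intro t1 t2 h1 h2 h3
    have hb2 : t2 ≤ t0 + β := by
      have := (le_min_iff.1 h3).1; push_cast at this; linarith
    rw [V_zero' S htt hb2, V_zero' S htt (h2.trans hb2)]
    simp; linarith
  | succ k ih =>
    intro t1 t2 h1 h2 h3
    have h3' : t2 ≤ min (t0 + ((k : ℝ) + 2) * β) (tf + β) := by
      have := h3; push_cast at this ⊢; convert this using 3; ring
    have hcore : ∀ a b, t0 + β ≤ a → a ≤ b → b ≤ min (t0 + ((k : ℝ) + 2) * β) (tf + β) →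
        α * (V b - V a) ≤ b - a := by
      intro a b hab1 hab2 hab3
      have hb_tf : b ≤ tf + β := (le_min_iff.1 hab3).2
      have hb_k : b ≤ t0 + ((k : ℝ) + 2) * β := (le_min_iff.1 hab3).1
      -- guarded monotonicity of τ below b
      have hmono : ∀ tg, tg ≤ b → ∀ s1 s2, s1 ∈ Icc t0 tf → s2 ∈ Icc t0 tf →
          s1 ≤ s2 → τ s2 ≤ tg → τ s1 ≤ τ s2 := by
        intro tg htg s1 s2 hs1 hs2 hle hτle
        have hs2b : s2 ≤ b - β := by
          have := tau_ge S htt hα hβ s2 hs2; linarith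
        have hihs : α * (V s2 - V s1) ≤ s2 - s1 := by
          refine ih s1 s2 hs1.1 hle (le_min ?_ (by linarith [hs2.2]))
          push_cast; linarith
        have hUm : primU t0 u s1 ≤ primU t0 u s2 := U_mono S hs1 hs2 hle
        rw [S.hτdef s1, S.hτdef s2]
        nlinarith [mul_nonneg hα (sub_nonneg.2 hUm)]
      obtain ⟨s1b, hs1bI, hV1, hiii1, hiv1⟩ :=
        char S htt hα hβ (hmono a (by linarith)) hab1 (by linarith)
      obtain ⟨s2b, hs2bI, hV2, hiii2, hiv2⟩ :=
        char S htt hα hβ (hmono b le_rfl) (by linarith) hb_tf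
      have hss : s1b ≤ s2b := by
        by_contra hcon
        push_neg at hcon
        set s := (s2b + s1b) / 2 with hsdef
        have hsm : s ∈ Icc t0 tf := ⟨by nlinarith [hs2bI.1], by nlinarith [hs1bI.2]⟩
        have hx1 : τ s ≤ a := hiii1 s hsm (by linarith)
        have hx2 : b < τ s := hiv2 s hsm (by linarith)
        linarith
      rcases eq_or_lt_of_le hss with heq | hlt
      · rw [hV1, hV2, heq]; simp; linarith
      · -- limits
        have hkey : ∀ s1' ∈ Ioo s1b s2b, α * (primU t0 u s2b - primU t0 u s1') ≤ b - a := by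
          intro s1' hs1'
          have hs1'I : s1' ∈ Icc t0 tf := ⟨hs1bI.1.trans hs1'.1.le, hs1'.2.le.trans hs2bI.2⟩
          have hstep : ∀ s2' ∈ Ioo s1' s2b, α * (primU t0 u s2' - primU t0 u s1') ≤ b - a := by
            intro s2' hs2'
            have hs2'I : s2' ∈ Icc t0 tf := ⟨hs1'I.1.trans hs2'.1.le, hs2'.2.le.trans hs2bI.2⟩
            have hx1 : a < τ s1' := hiv1 s1' hs1'I hs1'.1
            have hx2 : τ s2' ≤ b := hiii2 s2' hs2'I hs2'.2
            have hs2'b : s2' ≤ b - β := by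
              have := tau_ge S htt hα hβ s2' hs2'I; linarith
            have hih : α * (V s2' - V s1') ≤ s2' - s1' := by
              refine ih s1' s2' hs1'I.1 (hs2'.1.le) (le_min ?_ (by linarith [hs2'I.2]))
              push_cast; linarith
            have hτ1 := S.hτdef s1'
            have hτ2 := S.hτdef s2'
            nlinarith
          -- limit s2' → s2b from the left
          have hcl : s2b ∈ closure (Ioo s1' s2b) := by
            rw [closure_Ioo (ne_of_lt hs1'.2)]
            exact ⟨hs1'.2.le, le_rfl⟩
          haveI : (nhdsWithin s2b (Ioo s1' s2b)).NeBot :=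
            mem_closure_iff_nhdsWithin_neBot.mp hcl
          have hcw : ContinuousWithinAt
              (fun x => α * (primU t0 u x - primU t0 u s1')) (Ioo s1' s2b) s2b := by
            refine (continuousWithinAt_const.mul ((((U_cont S htt) s2b hs2bI).mono ?_).sub
              continuousWithinAt_const))
            intro x hx
            exact ⟨hs1'I.1.trans hx.1.le, hx.2.le.trans hs2bI.2⟩
          exact le_of_tendsto hcw (eventually_nhdsWithin_of_forall hstep)
        -- limit s1' → s1b from the right
        have hcl : s1b ∈ closure (Ioo s1b s2b) := by
          rw [closure_Ioo (ne_of_lt hlt)]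
          exact ⟨le_rfl, hlt.le⟩
        haveI : (nhdsWithin s1b (Ioo s1b s2b)).NeBot :=
          mem_closure_iff_nhdsWithin_neBot.mp hcl
        have hcw : ContinuousWithinAt
            (fun x => α * (primU t0 u s2b - primU t0 u x)) (Ioo s1b s2b) s1b := by
          refine (continuousWithinAt_const.mul (continuousWithinAt_const.sub
            (((U_cont S htt) s1b hs1bI).mono ?_)))
          intro x hx
          exact ⟨hs1bI.1.trans hx.1.le, hx.2.le.trans hs2bI.2⟩
        have hfin : α * (primU t0 u s2b - primU t0 u s1b) ≤ b - a :=
          le_of_tendsto hcw (eventually_nhdsWithin_of_forall hkey)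
        rw [hV1, hV2]; linarith
    rcases le_or_gt t2 (t0 + β) with hc1 | hc1
    · rw [V_zero' S htt hc1, V_zero' S htt (h2.trans hc1)]; simp; linarith
    rcases le_or_gt t1 (t0 + β) with hc2 | hc2
    · have hmain := hcore (t0 + β) t2 le_rfl hc1.le h3'
      rw [V_zero' S htt le_rfl] at hmain
      rw [V_zero' S htt hc2]
      linarith
    · exact hcore t1 t2 hc2.le h2 h3'

lemma lip_full (S : Sys t0 tf α β u V τ) (htt : t0 ≤ tf) (hα : 0 ≤ α) (hβ : 0 < β) :
    ∀ t1 t2, t0 ≤ t1 → t1 ≤ t2 → t2 ≤ tf + β → α * (V t2 - V t1) ≤ t2 - t1 := by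
  intro t1 t2 h1 h2 h3
  obtain ⟨m, hm⟩ := exists_nat_ge ((tf + β - t0) / β)
  have hm' : tf + β - t0 ≤ m * β := by
    rw [div_le_iff₀ hβ] at hm; linarith
  exact lip S htt hα hβ m t1 t2 h1 h2 (le_min (by push_cast; nlinarith) h3)

lemma tau_mono (S : Sys t0 tf α β u V τ) (htt : t0 ≤ tf) (hα : 0 ≤ α) (hβ : 0 < β) :
    ∀ s1 s2, s1 ∈ Icc t0 tf → s2 ∈ Icc t0 tf → s1 ≤ s2 → τ s1 ≤ τ s2 := by
  intro s1 s2 hs1 hs2 hle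
  have hlip := lip_full S htt hα hβ s1 s2 hs1.1 hle (by linarith [hs2.2])
  have hUm : primU t0 u s1 ≤ primU t0 u s2 := U_mono S hs1 hs2 hle
  rw [S.hτdef s1, S.hτdef s2]
  nlinarith [mul_nonneg hα (sub_nonneg.2 hUm)]

/-- Comparison between two systems with uniformly `ε`-close cumulative inflows. -/
lemma comp {u1 V1 τ1 u2 V2 τ2 : ℝ → ℝ}
    (S1 : Sys t0 tf α β u1 V1 τ1) (S2 : Sys t0 tf α β u2 V2 τ2)
    (htt : t0 ≤ tf) (hα : 0 ≤ α) (hβ : 0 < β) {ε : ℝ} (hε : 0 ≤ ε)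
    (hU : ∀ t ∈ Icc t0 tf, |primU t0 u1 t - primU t0 u2 t| ≤ ε) :
    ∀ k : ℕ, (2 * (k : ℝ) + 1) * (α * ε) ≤ β → ∀ t ∈ Icc t0 tf,
      t ≤ t0 + ((k : ℝ) + 1) * β → V1 t ≤ V2 t + 2 * (k : ℝ) * ε := by
  intro k
  induction k with
  | zero =>
    intro _ t htm hle
    rw [V_zero' S1 htt (by push_cast at hle; linarith)]
    have := V_nonneg S2 t
    simp only [Nat.cast_zero, mul_zero, zero_mul, add_zero]
    linarith
  | succ k ih =>
    intro hsmall t htm hle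
    have hαε : 0 ≤ α * ε := mul_nonneg hα hε
    have hsmall' : (2 * (k : ℝ) + 1) * (α * ε) ≤ β := by
      push_cast at hsmall; nlinarith
    rcases le_or_gt t (t0 + β) with hc | hc
    · rw [V_zero' S1 htt hc]
      have := V_nonneg S2 t
      push_cast; nlinarith
    obtain ⟨sb, hsbI, hV1, hiii, hiv⟩ := char S1 htt hα hβ
      (fun s1 s2 h1 h2 h3 _ => tau_mono S1 htt hα hβ s1 s2 h1 h2 h3)
      (by linarith) (by linarith [htm.2])
    set δ := (2 * (k : ℝ) + 1) * (α * ε) with hδ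
    have hδ0 : 0 ≤ δ := mul_nonneg (by positivity) (mul_nonneg hα hε)
    have hkey : ∀ s ∈ Ico t0 sb, primU t0 u1 s - ε ≤ V2 (t + δ) := by
      intro s hs
      have hsI : s ∈ Icc t0 tf := ⟨hs.1, hs.2.le.trans hsbI.2⟩
      have hτ1s : τ1 s ≤ t := hiii s hsI hs.2
      have hsk : s ≤ t0 + ((k : ℝ) + 1) * β := by
        have := tau_ge S1 htt hα hβ s hsI
        push_cast at hle; linarith
      have hihs : V1 s ≤ V2 s + 2 * (k : ℝ) * ε := ih hsmall' s hsI hsk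
      have hUs : primU t0 u2 s - primU t0 u1 s ≤ ε := by
        have := abs_le.1 (hU s hsI); linarith [this.1]
      have hτ2s : τ2 s ≤ t + δ := by
        have e1 := S1.hτdef s
        have e2 := S2.hτdef s
        have b1 : α * (primU t0 u2 s - primU t0 u1 s) ≤ α * ε :=
          mul_le_mul_of_nonneg_left hUs hα
        have b2 : α * (V1 s - V2 s) ≤ α * (2 * (k : ℝ) * ε) :=
          mul_le_mul_of_nonneg_left (by linarith) hα
        rw [hδ]; nlinarith
      have h5 : V2 (τ2 s) ≤ V2 (t + δ) := S2.hVmono hτ2s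
      rw [S2.hFIFO s hsI] at h5
      have h6 : primU t0 u1 s - primU t0 u2 s ≤ ε := by
        have := abs_le.1 (hU s hsI); linarith [this.2]
      linarith
    have hlim : primU t0 u1 sb - ε ≤ V2 (t + δ) := by
      rcases eq_or_lt_of_le hsbI.1 with heq | hlt
      · rw [← heq, U_zero]
        have := V_nonneg S2 (t + δ); linarith
      · have hcl : sb ∈ closure (Ico t0 sb) := by
          rw [closure_Ico (ne_of_lt hlt)]; exact ⟨hlt.le, le_rfl⟩
        haveI : (nhdsWithin sb (Ico t0 sb)).NeBot := mem_closure_iff_nhdsWithin_neBot.mp hcl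
        have hcw : ContinuousWithinAt (fun x => primU t0 u1 x - ε) (Ico t0 sb) sb :=
          ((((U_cont S1 htt) sb hsbI).mono
            (fun x hx => ⟨hx.1, hx.2.le.trans hsbI.2⟩)).sub continuousWithinAt_const)
        exact le_of_tendsto hcw (eventually_nhdsWithin_of_forall hkey)
    have hlip2 : α * (V2 (t + δ) - V2 t) ≤ δ := by
      have hδβ : δ ≤ β := hsmall'
      have := lip_full S2 htt hα hβ t (t + δ) htm.1 (by linarith) (by linarith [htm.2])
      linarith
    have hstep : V2 (t + δ) ≤ V2 t + (2 * (k : ℝ) + 1) * ε := by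
      rcases eq_or_lt_of_le hα with heq | hlt
      · have : δ = 0 := by rw [hδ, ← heq]; ring
        rw [this, add_zero]
        nlinarith
      · have h7 : α * (V2 (t + δ) - V2 t) ≤ α * ((2 * (k : ℝ) + 1) * ε) :=
          le_trans hlip2 (le_of_eq (by rw [hδ]; ring))
        have h8 := le_of_mul_le_mul_left h7 hlt
        linarith
    rw [hV1]
    push_cast
    nlinarith

lemma Ubound {f : ℝ → ℝ} (htt : t0 ≤ tf)
    (hf : MemLp f 2 (volume.restrict (Icc t0 tf))) :
    ∀ t ∈ Icc t0 tf, |∫ s in t0..t, f s| ≤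
      (eLpNorm f 2 (volume.restrict (Icc t0 tf))).toReal * (tf - t0) ^ ((1:ℝ)/2) := by
  haveI : IsFiniteMeasure (volume.restrict (Icc t0 tf)) :=
    ⟨by rw [Measure.restrict_apply_univ]; exact measure_Icc_lt_top⟩
  have hint : Integrable f (volume.restrict (Icc t0 tf)) := hf.integrable one_le_two
  have hio : IntegrableOn f (Icc t0 tf) volume := hint
  intro t htm
  have hii1 : IntervalIntegrable f volume t0 t :=
    (hio.mono_set (by rw [uIcc_of_le htm.1]; exact Icc_subset_Icc le_rfl htm.2)).intervalIntegrable
  have hii2 : IntervalIntegrable f volume t tf :=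
    (hio.mono_set (by rw [uIcc_of_le htm.2]; exact Icc_subset_Icc htm.1 le_rfl)).intervalIntegrable
  have habs1 : |∫ s in t0..t, f s| ≤ ∫ s in t0..t, |f s| :=
    intervalIntegral.abs_integral_le_integral_abs htm.1
  have hadd := intervalIntegral.integral_add_adjacent_intervals hii1.abs hii2.abs
  have hnn : 0 ≤ ∫ s in t..tf, |f s| :=
    intervalIntegral.integral_nonneg htm.2 (fun x _ => abs_nonneg _)
  have hmono2 : ∫ s in t0..t, |f s| ≤ ∫ s in t0..tf, |f s| := by linarith
  have heq : (∫ s in t0..tf, |f s|) = ∫ x, ‖f x‖ ∂(volume.restrict (Icc t0 tf)) := by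
    rw [intervalIntegral.integral_of_le htt, ← integral_Icc_eq_integral_Ioc]
    simp only [Real.norm_eq_abs]
  have hL1 : ENNReal.ofReal (∫ x, ‖f x‖ ∂(volume.restrict (Icc t0 tf)))
      = eLpNorm f 1 (volume.restrict (Icc t0 tf)) :=
    (ofReal_integral_norm_eq_lintegral_enorm hint).trans
      eLpNorm_one_eq_lintegral_enorm.symm
  have hL1' : (∫ x, ‖f x‖ ∂(volume.restrict (Icc t0 tf)))
      = (eLpNorm f 1 (volume.restrict (Icc t0 tf))).toReal := by
    rw [← hL1, ENNReal.toReal_ofReal (integral_nonneg (fun x => norm_nonneg _))]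
  have hcomp : eLpNorm f 1 (volume.restrict (Icc t0 tf)) ≤
      eLpNorm f 2 (volume.restrict (Icc t0 tf)) *
        (volume.restrict (Icc t0 tf)) Set.univ ^ ((1:ℝ)/2) := by
    have := eLpNorm_le_eLpNorm_mul_rpow_measure_univ (μ := volume.restrict (Icc t0 tf))
      (p := 1) (q := 2) (by norm_num) hf.1
    convert this using 2
    norm_num
  have hμuniv : (volume.restrict (Icc t0 tf)) Set.univ = ENNReal.ofReal (tf - t0) := by
    rw [Measure.restrict_apply_univ, Real.volume_Icc]
  have hRne : eLpNorm f 2 (volume.restrict (Icc t0 tf)) *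
      (volume.restrict (Icc t0 tf)) Set.univ ^ ((1:ℝ)/2) ≠ ⊤ := by
    apply ENNReal.mul_ne_top hf.2.ne
    rw [hμuniv]
    exact ENNReal.rpow_ne_top_of_nonneg (by norm_num) ENNReal.ofReal_ne_top
  have htoReal := ENNReal.toReal_mono hRne hcomp
  rw [ENNReal.toReal_mul, hμuniv, ← ENNReal.toReal_rpow,
    ENNReal.toReal_ofReal (by linarith : (0:ℝ) ≤ tf - t0)] at htoReal
  calc |∫ s in t0..t, f s| ≤ ∫ s in t0..t, |f s| := habs1
    _ ≤ ∫ s in t0..tf, |f s| := hmono2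
    _ = (eLpNorm f 1 (volume.restrict (Icc t0 tf))).toReal := by rw [heq, hL1']
    _ ≤ _ := htoReal

end SingleArcAux

open SingleArcAux

set_option maxHeartbeats 2000000 in
theorem single_arc_exit_time_and_exit_count_uniform_conv
    (t0 tf α β : ℝ) (ht : t0 < tf) (hα : 0 ≤ α) (hβ : 0 < β)
    (u : ℕ → ℝ → ℝ) (ulim : ℝ → ℝ)
    (huL2 : ∀ n, MemLp (u n) 2 (volume.restrict (Icc t0 tf)))
    (hulimL2 : MemLp ulim 2 (volume.restrict (Icc t0 tf)))
    (hupos : ∀ n t, 0 ≤ u n t) (hulimpos : ∀ t, 0 ≤ ulim t)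
    (hconv : Tendsto
      (fun n => eLpNorm (u n - ulim) 2 (volume.restrict (Icc t0 tf))) atTop (nhds 0))
    (τn : ℕ → ℝ → ℝ) (τ : ℝ → ℝ) (Vn : ℕ → ℝ → ℝ) (V : ℝ → ℝ)
    (hVmono : ∀ n, Monotone (Vn n)) (hVlimmono : Monotone V)
    (hV0 : ∀ n t, t ≤ t0 → Vn n t = 0) (hVlim0 : ∀ t, t ≤ t0 → V t = 0)
    (hτdef : ∀ n t, τn n t = t + α * ((∫ s in t0..t, u n s) - Vn n t) + β)
    (hτlimdef : ∀ t, τ t = t + α * ((∫ s in t0..t, ulim s) - V t) + β)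
    (hFIFOn : ∀ n, ∀ t ∈ Icc t0 tf, Vn n (τn n t) = ∫ s in t0..t, u n s)
    (hFIFO : ∀ t ∈ Icc t0 tf, V (τ t) = ∫ s in t0..t, ulim s) :
    TendstoUniformlyOn τn τ atTop (Icc t0 tf) ∧
    TendstoUniformlyOn Vn V atTop (Icc t0 tf) := by
  have htt : t0 ≤ tf := ht.le
  haveI : IsFiniteMeasure (volume.restrict (Icc t0 tf)) :=
    ⟨by rw [Measure.restrict_apply_univ]; exact measure_Icc_lt_top⟩
  have S : ∀ n, Sys t0 tf α β (u n) (Vn n) (τn n) := fun n =>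
    ⟨(huL2 n).integrable one_le_two, hupos n, hVmono n, hV0 n,
      fun t => by simpa [primU] using hτdef n t,
      fun t htm => by simpa [primU] using hFIFOn n t htm⟩
  have SL : Sys t0 tf α β ulim V τ :=
    ⟨hulimL2.integrable one_le_two, hulimpos, hVlimmono, hVlim0,
      fun t => by simpa [primU] using hτlimdef t,
      fun t htm => by simpa [primU] using hFIFO t htm⟩
  set e : ℕ → ℝ :=
    fun n => (eLpNorm (u n - ulim) 2 (volume.restrict (Icc t0 tf))).toReal *
      (tf - t0) ^ ((1:ℝ)/2) with he
  have he0 : ∀ n, 0 ≤ e n := fun n =>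
    mul_nonneg ENNReal.toReal_nonneg (Real.rpow_nonneg (by linarith) _)
  have hUb : ∀ n, ∀ t ∈ Icc t0 tf,
      |primU t0 (u n) t - primU t0 ulim t| ≤ e n := by
    intro n t htm
    have hii1 : IntervalIntegrable (u n) volume t0 t :=
      U_intInt (S n) (left_mem_Icc.2 htt) htm
    have hii2 : IntervalIntegrable ulim volume t0 t :=
      U_intInt SL (left_mem_Icc.2 htt) htm
    have h1 : primU t0 (u n) t - primU t0 ulim t = ∫ s in t0..t, (u n - ulim) s := by
      rw [primU, primU, ← intervalIntegral.integral_sub hii1 hii2]; rfl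
    rw [h1]
    exact Ubound htt ((huL2 n).sub hulimL2) t htm
  have hetend : Tendsto e atTop (nhds 0) := by
    have h1 : Tendsto
        (fun n => (eLpNorm (u n - ulim) 2 (volume.restrict (Icc t0 tf))).toReal)
        atTop (nhds 0) := by
      have h2 := (ENNReal.tendsto_toReal (a := 0) (by simp)).comp hconv
      simpa [Function.comp_def] using h2
    have h3 := h1.mul_const ((tf - t0) ^ ((1:ℝ)/2))
    rw [zero_mul] at h3
    exact h3
  obtain ⟨N, hN⟩ := exists_nat_ge ((tf - t0) / β)
  have hNtf : tf ≤ t0 + ((N : ℝ) + 1) * β := by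
    rw [div_le_iff₀ hβ] at hN; nlinarith
  set A := (2 * (N : ℝ) + 1) * α + 1 with hA
  have hA0 : 0 < A := by positivity
  set C := A + (2 * (N : ℝ) + 1) with hC
  have hC0 : 0 < C := by positivity
  have main : ∀ ε' : ℝ, 0 < ε' → ∀ᶠ n in atTop, ∀ t ∈ Icc t0 tf,
      dist (τ t) (τn n t) < ε' ∧ dist (V t) (Vn n t) < ε' := by
    intro ε' hε'
    have hev : ∀ᶠ n in atTop, e n < min (β / A) (ε' / C) :=
      hetend.eventually_lt_const (lt_min (by positivity) (by positivity))
    filter_upwards [hev] with n hen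
    have heβ : A * e n < β := by
      have h4 : e n < β / A := lt_of_lt_of_le hen (min_le_left _ _)
      calc A * e n < A * (β / A) := by
            exact mul_lt_mul_of_pos_left h4 hA0
        _ = β := by field_simp
      -- fix below if needed
    have heε : C * e n < ε' := by
      have h4 : e n < ε' / C := lt_of_lt_of_le hen (min_le_right _ _)
      calc C * e n < C * (ε' / C) := mul_lt_mul_of_pos_left h4 hC0
        _ = ε' := by field_simp
    have hsm : (2 * (N : ℝ) + 1) * (α * e n) ≤ β := by
      have h5 : (2 * (N : ℝ) + 1) * (α * e n) ≤ A * e n := by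
        rw [hA]; nlinarith [he0 n]
      linarith
    intro t htm
    have hle : t ≤ t0 + ((N : ℝ) + 1) * β := htm.2.trans hNtf
    have h12 := comp (S n) SL htt hα hβ (he0 n) (hUb n) N hsm t htm hle
    have h21 := comp SL (S n) htt hα hβ (he0 n)
      (fun s hs => by rw [abs_sub_comm]; exact hUb n s hs) N hsm t htm hle
    have hVd : |V t - Vn n t| ≤ 2 * (N : ℝ) * e n := by
      rw [abs_le]; constructor <;> linarith
    have hUd := abs_le.1 (hUb n t htm)
    constructor
    · rw [Real.dist_eq]
      have hτeq : τ t - τn n t =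
          α * (primU t0 ulim t - primU t0 (u n) t) - α * (V t - Vn n t) := by
        have e1 : τn n t = t + α * (primU t0 (u n) t - Vn n t) + β := (S n).hτdef t
        have e2 : τ t = t + α * (primU t0 ulim t - V t) + β := SL.hτdef t
        rw [e1, e2]; ring
      have hVd' := abs_le.1 hVd
      rw [hτeq, abs_lt]
      constructor <;> nlinarith [mul_le_mul_of_nonneg_left hUd.1 hα,
        mul_le_mul_of_nonneg_left hUd.2 hα,
        mul_le_mul_of_nonneg_left hVd'.1 hα,
        mul_le_mul_of_nonneg_left hVd'.2 hα, he0 n]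
    · rw [Real.dist_eq]
      calc |V t - Vn n t| ≤ 2 * (N : ℝ) * e n := hVd
        _ ≤ C * e n := by rw [hC, hA]; nlinarith [he0 n]
        _ < ε' := heε
  constructor
  · rw [Metric.tendstoUniformlyOn_iff]
    intro ε' hε'
    exact (main ε' hε').mono (fun n hn t htm => (hn t htm).1)
  · rw [Metric.tendstoUniformlyOn_iff]
    intro ε' hε'
    exact (main ε' hε').mono (fun n hn t htm => (hn t htm).2)
end
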